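/- arXiv:0809.4936 — 3 statements merged into one kernel-verified Lean document; each statement's English description precedes it below -/
import Mathlib

section
/- Let D_n be the n×n symmetric tridiagonal matrix with diagonal entries all equal to 1/2, entry (1,2) and (2,1) equal to 1/(2√2), and all other super- and sub-diagonal entries equal to 1/4. Then the characteristic polynomial of D_n equals the monic Chebyshev polynomial T̄_n(x) = 2^{-2n+1} cos(n arccos(2x−1)) on [0,1]. -/
open Matrix Polynomial

/-- General tridiagonal matrix: diagonal `d`, entries `(k,k+1)` and `(k+1,k)` equal `f k`. -/
def tridCP (d : ℝ) (f : ℕ → ℝ) (n : ℕ) : Matrix (Fin n) (Fin n) ℝ :=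
  Matrix.of fun i j =>
    if (i : ℕ) = j then d else if (i : ℕ) + 1 = j then f i
      else if (j : ℕ) + 1 = i then f j else 0

lemma tridCP_submatrix (d : ℝ) (f : ℕ → ℝ) (n : ℕ) :
    (tridCP d f (n + 1)).submatrix Fin.succ Fin.succ = tridCP d (fun k => f (k + 1)) n := by
  ext i j
  simp only [Matrix.submatrix_apply, tridCP, Matrix.of_apply, Fin.val_succ]
  split_ifs with h1 h2 h3 h4 h5 h6 h7 <;> first | rfl | omega | (congr 1; omega)

lemma det_tridCP_rec (d : ℝ) (f : ℕ → ℝ) (n : ℕ) :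
    (tridCP d f (n + 2)).det =
      d * (tridCP d (fun k => f (k + 1)) (n + 1)).det
        - (f 0) ^ 2 * (tridCP d (fun k => f (k + 2)) n).det := by
  have hB : ((tridCP d f (n + 2)).submatrix Fin.succ (Fin.succAbove 1)).det
      = f 0 * (tridCP d (fun k => f (k + 2)) n).det := by
    rw [Matrix.det_succ_column_zero, Fin.sum_univ_succ]
    have h1 : (1 : Fin (n + 2)) = Fin.succ 0 := by simp [Fin.succ_zero_eq_one]
    have e0 : (tridCP d f (n + 2)).submatrix Fin.succ (Fin.succAbove 1) 0 0 = f 0 := by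
      simp only [Matrix.submatrix_apply, h1, Fin.succ_succAbove_zero]
      simp [tridCP]
    have e1 : ∀ i : Fin n,
        (tridCP d f (n + 2)).submatrix Fin.succ (Fin.succAbove 1) i.succ 0 = 0 := by
      intro i
      simp only [Matrix.submatrix_apply, h1, Fin.succ_succAbove_zero]
      simp only [tridCP, Matrix.of_apply, Fin.val_succ, Fin.val_zero]
      split_ifs <;> first | rfl | omega | contradiction
    have e2 : ((tridCP d f (n + 2)).submatrix Fin.succ (Fin.succAbove 1)).submatrix
        (Fin.succAbove 0) Fin.succ = tridCP d (fun k => f (k + 2)) n := by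
      ext i j
      simp only [Matrix.submatrix_apply, Fin.succAbove_zero, h1, Fin.succ_succAbove_succ]
      simp only [tridCP, Matrix.of_apply, Fin.val_succ]
      split_ifs with h1 h2 h3 h4 h5 h6 h7 <;> first | rfl | omega | (congr 1; omega)
    rw [e0, e2]
    simp only [e1, Fin.val_zero, pow_zero, one_mul, mul_zero, zero_mul, Finset.sum_const_zero,
      add_zero]
  rw [Matrix.det_succ_row_zero, Fin.sum_univ_succ, Fin.sum_univ_succ]
  have a00 : tridCP d f (n + 2) 0 0 = d := by simp [tridCP]
  have a01 : tridCP d f (n + 2) 0 1 = f 0 := by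
    norm_num [tridCP]
  have arest : ∀ j : Fin n, tridCP d f (n + 2) 0 j.succ.succ = 0 := by
    intro j
    simp only [tridCP, Matrix.of_apply, Fin.val_succ, Fin.val_zero]
    split_ifs <;> first | rfl | omega | contradiction
  have hsucc : (0 : Fin (n + 2)).succAbove = Fin.succ := Fin.succAbove_zero
  rw [a00]
  simp only [arest, mul_zero, zero_mul, Finset.sum_const_zero, add_zero, Fin.val_zero, pow_zero,
    one_mul, Fin.val_succ, pow_succ, pow_zero]
  rw [hsucc, tridCP_submatrix]
  rw [show (Fin.succ (0 : Fin (n+1))) = (1 : Fin (n + 2)) by simp [Fin.succ_zero_eq_one]] <;>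
    try skip
  rw [a01, hB]
  ring

/-- The uniform tridiagonal determinant sequence. -/
noncomputable def tseq (x : ℝ) (k : ℕ) : ℝ := (tridCP (x - 1/2) (fun _ => -(1/4)) k).det

lemma tseq_zero (x : ℝ) : tseq x 0 = 1 := Matrix.det_fin_zero

lemma tseq_one (x : ℝ) : tseq x 1 = x - 1/2 := by
  rw [tseq, Matrix.det_fin_one]; simp [tridCP]

lemma tseq_rec (x : ℝ) (k : ℕ) :
    tseq x (k + 2) = (x - 1/2) * tseq x (k + 1) - (1/16) * tseq x k := by
  have := det_tridCP_rec (x - 1/2) (fun _ => -(1/4)) k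
  rw [tseq, tseq, tseq, this]
  norm_num

/-- `4^k * tseq` against Chebyshev. -/
lemma tseq_cheb (x : ℝ) : ∀ k : ℕ,
    2 * (2*x-1) * (4 ^ (k+1) * tseq x (k+1)) - 2 * (4 ^ k * tseq x k)
      = 2 * (Polynomial.Chebyshev.T ℝ ((k : ℤ) + 2)).eval (2*x-1) := by
  have key : ∀ k : ℕ, (4:ℝ) ^ (k + 2) * tseq x (k+2)
      = 2 * (2*x-1) * (4 ^ (k+1) * tseq x (k+1)) - 4 ^ k * tseq x k := by
    intro k
    rw [tseq_rec]
    ring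
  intro k
  induction k using Nat.twoStepInduction with
  | zero =>
      have h2 : Polynomial.Chebyshev.T ℝ (2:ℤ) = 2 * X ^ 2 - 1 := Polynomial.Chebyshev.T_two ℝ
      simp only [Nat.cast_zero, zero_add, pow_zero, pow_one, tseq_zero, tseq_one]
      rw [h2]
      simp
      ring
  | one =>
      have h3 : Polynomial.Chebyshev.T ℝ (3:ℤ) = 4 * X ^ 3 - 3 * X := by
        have h2 := Polynomial.Chebyshev.T_add_two ℝ 1
        norm_num at h2 ⊢
        rw [h2, Polynomial.Chebyshev.T_two]
        ring
      norm_num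
      rw [show tseq x 2 = (x - 1/2) * tseq x 1 - 1/16 * tseq x 0 from tseq_rec x 0,
        tseq_one, tseq_zero, h3]
      simp
      ring
  | more k ih1 ih2 =>
      have hT : Polynomial.Chebyshev.T ℝ (((k+2 : ℕ) : ℤ) + 2)
          = 2 * X * Polynomial.Chebyshev.T ℝ (((k+1 : ℕ) : ℤ) + 2)
            - Polynomial.Chebyshev.T ℝ ((k : ℤ) + 2) := by
        have := Polynomial.Chebyshev.T_add_two ℝ ((k : ℤ) + 2)
        push_cast
        convert this using 2 <;> push_cast <;> ring
      have e1 := key (k + 1)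
      have e2 := key k
      have hTe : (Polynomial.Chebyshev.T ℝ (((k+2 : ℕ) : ℤ) + 2)).eval (2*x-1)
          = 2 * (2*x-1) * (Polynomial.Chebyshev.T ℝ (((k+1 : ℕ) : ℤ) + 2)).eval (2*x-1)
            - (Polynomial.Chebyshev.T ℝ ((k : ℤ) + 2)).eval (2*x-1) := by
        rw [hT]; simp
      rw [hTe]
      have e3 : (4:ℝ) ^ (k + 1 + 2) * tseq x (k + 1 + 2)
          = 2 * (2*x-1) * (4 ^ (k+2) * tseq x (k+2)) - 4 ^ (k+1) * tseq x (k+1) := key (k+1)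
      have e4 : (4:ℝ) ^ (k + 2) * tseq x (k+2)
          = 2 * (2*x-1) * (4 ^ (k+1) * tseq x (k+1)) - 4 ^ k * tseq x k := key k
      have goal1 : (2:ℝ) * (2*x-1) * (4 ^ (k + 3) * tseq x (k + 3)) - 2 * (4 ^ (k+2) * tseq x (k+2))
          = 2 * (2*x-1) * (2 * (2*x-1) * (4 ^ (k+2) * tseq x (k+2)) - 2 * (4 ^ (k+1) * tseq x (k+1)))
            - (2 * (2*x-1) * (4 ^ (k+1) * tseq x (k+1)) - 2 * (4 ^ k * tseq x k)) := by
      -- expand via key (k+1)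
        have e5 : (4:ℝ) ^ (k + 3) * tseq x (k + 3)
            = 2 * (2*x-1) * (4 ^ (k+2) * tseq x (k+2)) - 4 ^ (k+1) * tseq x (k+1) := by
          simpa [show k + 1 + 2 = k + 3 from rfl] using e3
        rw [e5, e4]
        ring
      calc (2:ℝ) * (2*x-1) * (4 ^ (k + 2 + 1) * tseq x (k + 2 + 1)) - 2 * (4 ^ (k+2) * tseq x (k+2))
          = 2 * (2*x-1) * (2 * (2*x-1) * (4 ^ (k+2) * tseq x (k+2)) - 2 * (4 ^ (k+1) * tseq x (k+1)))
            - (2 * (2*x-1) * (4 ^ (k+1) * tseq x (k+1)) - 2 * (4 ^ k * tseq x k)) := by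
            simpa [show k + 2 + 1 = k + 3 from rfl] using goal1
        _ = 2 * (2*x-1) * (2 * (Polynomial.Chebyshev.T ℝ (((k+1 : ℕ) : ℤ) + 2)).eval (2*x-1))
            - 2 * (Polynomial.Chebyshev.T ℝ ((k : ℤ) + 2)).eval (2*x-1) := by rw [ih2, ih1]
        _ = _ := by ring

/-- The characteristic polynomial of the tridiagonal matrix `D_n` (diagonal `1/2`,
entries `(1,2)` and `(2,1)` equal to `1/(2√2)`, remaining sub/super-diagonal entries
`1/4`) agrees on `[0,1]` with the monic Chebyshev polynomial
`T̄_n(x) = 2^(-2n+1) cos (n arccos (2x-1))`. -/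
theorem charpoly_eq_chebyshev (n : ℕ) (hn : 1 ≤ n) (D : Matrix (Fin n) (Fin n) ℝ)
    (hD : ∀ i j : Fin n, D i j =
      if i = j then 1 / 2
      else if (i:ℕ) + 1 = j ∨ (j:ℕ) + 1 = i then
        (if (i:ℕ) = 0 ∨ (j:ℕ) = 0 then 1 / (2 * Real.sqrt 2) else 1 / 4)
      else 0) :
    ∀ x ∈ Set.Icc (0:ℝ) 1,
      (Matrix.charpoly D).eval x =
        (2:ℝ) ^ (-(2 * (n:ℤ)) + 1) * Real.cos (n * Real.arccos (2 * x - 1)) := by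
  intro x hx
  obtain ⟨hx0, hx1⟩ := hx
  set F : ℕ → ℝ := fun k => if k = 0 then -(1 / (2 * Real.sqrt 2)) else -(1/4) with hF
  -- eval of charpoly is det of tridCP
  have hev : (Matrix.charpoly D).eval x = (tridCP (x - 1/2) F n).det := by
    have : (Matrix.charpoly D).eval x
        = ((Polynomial.evalRingHom x).mapMatrix (Matrix.charmatrix D)).det := by
      rw [Matrix.charpoly, ← RingHom.map_det]
      rfl
    rw [this]
    congr 1
    ext i j
    simp only [RingHom.mapMatrix_apply, Matrix.map_apply, Matrix.charmatrix_apply,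
      Polynomial.coe_evalRingHom, Polynomial.eval_sub, Polynomial.eval_C, hD i j, tridCP,
      Matrix.of_apply]
    by_cases hij : i = j
    · subst hij
      simp
    · have hij' : (i : ℕ) ≠ (j : ℕ) := fun h => hij (Fin.ext h)
      rw [Matrix.diagonal_apply_ne _ hij, if_neg hij, if_neg hij']
      simp only [Polynomial.eval_zero, zero_sub]
      by_cases h1 : (i : ℕ) + 1 = (j : ℕ)
      · have : (i:ℕ) + 1 = j ∨ (j:ℕ) + 1 = i := Or.inl h1
        rw [if_pos this, if_pos h1]
        by_cases hi0 : (i : ℕ) = 0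
        · rw [if_pos (Or.inl hi0)]; simp [hF, hi0]
        · rw [if_neg (by omega : ¬((i:ℕ) = 0 ∨ (j:ℕ) = 0))]; simp [hF, hi0]
      · by_cases h2 : (j : ℕ) + 1 = (i : ℕ)
        · rw [if_pos (Or.inr h2), if_neg h1, if_pos h2]
          by_cases hj0 : (j : ℕ) = 0
          · rw [if_pos (Or.inr hj0)]; simp [hF, hj0]
          · rw [if_neg (by omega : ¬((i:ℕ) = 0 ∨ (j:ℕ) = 0))]; simp [hF, hj0]
        · rw [if_neg (by tauto), if_neg h1, if_neg h2]
          simp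
  rw [hev]
  have hc1 : -1 ≤ 2 * x - 1 := by linarith
  have hc2 : 2 * x - 1 ≤ 1 := by linarith
  have hcos : Real.cos (Real.arccos (2 * x - 1)) = 2 * x - 1 := Real.cos_arccos hc1 hc2
  have hTcos : ∀ m : ℤ, (Polynomial.Chebyshev.T ℝ m).eval (2 * x - 1)
      = Real.cos (m * Real.arccos (2 * x - 1)) := by
    intro m
    conv_lhs => rw [← hcos]
    exact Polynomial.Chebyshev.T_real_cos _ _
  have hpow : ((2:ℝ) ^ (-(2 * (n:ℤ)) + 1)) = 2 / 4 ^ n := by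
    rw [zpow_add₀ (by norm_num : (2:ℝ) ≠ 0), zpow_one, _root_.zpow_neg]
    have : ((2:ℝ) ^ (2 * (n:ℤ))) = 4 ^ n := by
      rw [show (2 * (n:ℤ)) = ((2 * n : ℕ) : ℤ) by push_cast; ring, zpow_natCast,
        pow_mul]
      norm_num
    rw [this]
    ring
  rw [hpow]
  -- split on n = 1 vs n ≥ 2
  obtain ⟨m, rfl⟩ | rfl : (∃ m, n = m + 2) ∨ n = 1 := by
    rcases n with _ | _ | m
    · omega
    · right; rfl
    · left; exact ⟨m, rfl⟩
  · -- n = m + 2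
    have hrec := det_tridCP_rec (x - 1/2) F m
    have hshift1 : (fun k => F (k + 1)) = (fun _ : ℕ => -(1/4)) := by
      funext k; simp [hF]
    have hshift2 : (fun k => F (k + 2)) = (fun _ : ℕ => -(1/4)) := by
      funext k; simp [hF]
    have hF0 : (F 0) ^ 2 = 1 / 8 := by
      have h2 : Real.sqrt 2 ^ 2 = 2 := Real.sq_sqrt (by norm_num)
      simp only [hF, if_pos rfl]
      rw [neg_pow]
      field_simp
      nlinarith [h2]
    rw [hrec, hshift1, hshift2, hF0]
    have hkey := tseq_cheb x m
    have hT := hTcos ((m : ℤ) + 2)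
    push_cast at hT
    have hne : (4:ℝ) ^ (m + 2) ≠ 0 := by positivity
    show (x - 1/2) * tseq x (m + 1) - 1/8 * tseq x m
        = 2 / 4 ^ (m + 2) * Real.cos ((((m + 2 : ℕ)) : ℝ) * Real.arccos (2 * x - 1))
    push_cast
    rw [show (2:ℝ) / 4 ^ (m + 2) * Real.cos (((m:ℝ) + 2) * Real.arccos (2 * x - 1))
        = (2 * Real.cos (((m:ℝ) + 2) * Real.arccos (2 * x - 1))) / 4 ^ (m + 2) by ring,
      eq_div_iff hne, ← hT, ← hkey]
    ring
  · -- n = 1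
    have : (tridCP (x - 1/2) F 1).det = x - 1/2 := by
      rw [Matrix.det_fin_one]; simp [tridCP]
    rw [this]
    have hT := hTcos 1
    rw [Polynomial.Chebyshev.T_one, Polynomial.eval_X] at hT
    have : ((1 : ℕ) : ℝ) * Real.arccos (2 * x - 1) = ((1 : ℤ) : ℝ) * Real.arccos (2 * x - 1) := by
      norm_num
    rw [this, ← hT]
    norm_num
    linarith
end

section
/- Let F and G be distribution functions on ℝ with respective point masses 1/n at points X_{(1)} ≤ … ≤ X_{(n)} and x_{(1)} ≤ … ≤ x_{(n)}. Then the Lévy distance satisfies L(F,G)³ ≤ (1/n) Σ_{j=1}^n |X_{(j)} − x_{(j)}|². -/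
open scoped Classical

/-- The Lévy distance between two distribution functions. -/
noncomputable def levyDist (F G : ℝ → ℝ) : ℝ :=
  sInf {ε : ℝ | 0 < ε ∧ ∀ x : ℝ, F (x - ε) - ε ≤ G x ∧ G x ≤ F (x + ε) + ε}

lemma levy_aux {n : ℕ} (Z W : Fin n → ℝ) {ε : ℝ} (hε : 0 < ε)
    {A B : Finset (Fin n)} (hAB : ∀ j ∈ A, j ∉ B → ε < |Z j - W j|)
    (hcard : (B.card : ℝ) + ε * n < (A.card : ℝ)) :
    (n : ℝ) * ε ^ 3 < ∑ j, |Z j - W j| ^ 2 := by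
  have h1 : (A.card : ℝ) ≤ ((A \ B).card : ℝ) + (B.card : ℝ) := by
    exact_mod_cast Finset.card_le_card_sdiff_add_card
  have h2 : ε * n < ((A \ B).card : ℝ) := by linarith
  have h3 : ∀ j ∈ A \ B, ε ^ 2 ≤ |Z j - W j| ^ 2 := by
    intro j hj
    rw [Finset.mem_sdiff] at hj
    have h := hAB j hj.1 hj.2
    nlinarith [abs_nonneg (Z j - W j)]
  have hε2 : 0 < ε ^ 2 := by positivity
  calc (n : ℝ) * ε ^ 3 = (ε * n) * ε ^ 2 := by ring
    _ < ((A \ B).card : ℝ) * ε ^ 2 := by nlinarith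
    _ = ∑ _j ∈ A \ B, ε ^ 2 := by rw [Finset.sum_const, nsmul_eq_mul]
    _ ≤ ∑ j ∈ A \ B, |Z j - W j| ^ 2 := Finset.sum_le_sum h3
    _ ≤ ∑ j, |Z j - W j| ^ 2 :=
        Finset.sum_le_sum_of_subset_of_nonneg (Finset.subset_univ _)
          (fun j _ _ => sq_nonneg _)

/-- For empirical distribution functions `F` and `G` of the ordered samples
`X_(1) ≤ … ≤ X_(n)` and `x_(1) ≤ … ≤ x_(n)`, the Lévy distance satisfies
`L(F,G)³ ≤ (1/n) ∑_j |X_(j) - x_(j)|²`. -/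
theorem levy_dist_cubed_le (n : ℕ) (hn : 1 ≤ n) (X Y : Fin n → ℝ)
    (hX : Monotone X) (hY : Monotone Y) (F G : ℝ → ℝ)
    (hF : ∀ t : ℝ, F t = ((Finset.univ.filter fun j => X j ≤ t).card : ℝ) / n)
    (hG : ∀ t : ℝ, G t = ((Finset.univ.filter fun j => Y j ≤ t).card : ℝ) / n) :
    levyDist F G ^ 3 ≤ (1 / (n:ℝ)) * ∑ j, |X j - Y j| ^ 2 := by
  have hnpos : (0:ℝ) < n := by exact_mod_cast hn
  set S : ℝ := (1 / (n:ℝ)) * ∑ j, |X j - Y j| ^ 2 with hSdef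
  have hsumnn : 0 ≤ ∑ j, |X j - Y j| ^ 2 :=
    Finset.sum_nonneg fun j _ => sq_nonneg _
  have hS0 : 0 ≤ S := mul_nonneg (by positivity) hsumnn
  have hsum : ∑ j, |X j - Y j| ^ 2 = (n : ℝ) * S := by
    rw [hSdef]; field_simp
  set c : ℝ := S ^ ((3:ℕ) : ℝ)⁻¹ with hcdef
  have hc0 : 0 ≤ c := Real.rpow_nonneg hS0 _
  have hc3 : c ^ 3 = S := Real.rpow_inv_natCast_pow hS0 (by norm_num)
  have hmem : ∀ δ : ℝ, 0 < δ →
      (c + δ) ∈ {ε : ℝ | 0 < ε ∧ ∀ x : ℝ, F (x - ε) - ε ≤ G x ∧ G x ≤ F (x + ε) + ε} := by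
    intro δ hδ
    set ε := c + δ with hεdef
    have hεpos : 0 < ε := by positivity
    have hε3 : S < ε ^ 3 := by
      rw [← hc3]
      exact pow_lt_pow_left₀ (lt_add_of_pos_right c hδ) hc0 (by norm_num)
    refine ⟨hεpos, fun x => ⟨?_, ?_⟩⟩
    · by_contra h
      push_neg at h
      rw [hF, hG] at h
      set A := Finset.univ.filter fun j => X j ≤ x - ε with hA
      set B := Finset.univ.filter fun j => Y j ≤ x with hB
      have hcard : (B.card : ℝ) + ε * n < (A.card : ℝ) := by
        rw [div_lt_iff₀ hnpos] at h
        have h2 : ((A.card : ℝ) / n - ε) * n = (A.card : ℝ) - ε * n := by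
          field_simp
        rw [h2] at h
        linarith
      have key := levy_aux X Y hεpos (fun j hjA hjB => ?_) hcard
      · rw [hsum] at key
        nlinarith
      · simp only [hA, hB, Finset.mem_filter, Finset.mem_univ, true_and] at hjA hjB
        push_neg at hjB
        have h1 : Y j - X j ≤ |X j - Y j| := by
          rw [abs_sub_comm]; exact le_abs_self _
        linarith
    · by_contra h
      push_neg at h
      rw [hF, hG] at h
      set A := Finset.univ.filter fun j => Y j ≤ x with hA
      set B := Finset.univ.filter fun j => X j ≤ x + ε with hB
      have hcard : (B.card : ℝ) + ε * n < (A.card : ℝ) := by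
        rw [lt_div_iff₀ hnpos] at h
        have h2 : ((B.card : ℝ) / n + ε) * n = (B.card : ℝ) + ε * n := by
          rw [add_mul, div_mul_cancel₀ _ hnpos.ne']
        rw [h2] at h
        linarith
      have key := levy_aux Y X hεpos (fun j hjA hjB => ?_) hcard
      · rw [show ∑ j, |Y j - X j| ^ 2 = ∑ j, |X j - Y j| ^ 2 by
            exact Finset.sum_congr rfl fun j _ => by rw [abs_sub_comm]] at key
        rw [hsum] at key
        nlinarith
      · simp only [hA, hB, Finset.mem_filter, Finset.mem_univ, true_and] at hjA hjB
        push_neg at hjB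
        have h1 : X j - Y j ≤ |Y j - X j| := by
          rw [abs_sub_comm]; exact le_abs_self _
        linarith
  have hbdd : BddBelow {ε : ℝ | 0 < ε ∧ ∀ x : ℝ, F (x - ε) - ε ≤ G x ∧ G x ≤ F (x + ε) + ε} :=
    ⟨0, fun ε hε => le_of_lt hε.1⟩
  have h1 : levyDist F G ≤ c := by
    apply le_of_forall_pos_le_add
    intro δ hδ
    exact csInf_le hbdd (hmem δ hδ)
  have h0 : 0 ≤ levyDist F G :=
    le_csInf ⟨c + 1, hmem 1 one_pos⟩ (fun ε hε => le_of_lt hε.1)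
  calc levyDist F G ^ 3 ≤ c ^ 3 := pow_le_pow_left₀ h0 h1 3
    _ = S := hc3
end

section
/- Every symmetric tridiagonal real n×n matrix with nonzero off-diagonal entries has n distinct real eigenvalues. -/
open Polynomial Matrix


open Polynomial Matrix

/-- Characteristic polynomial is invariant under conjugation. -/
lemma charpoly_conj_aux {m : Type*} [Fintype m] [DecidableEq m] {R : Type*} [CommRing R]
    (V W D : Matrix m m R) (h1 : V * W = 1) :
    (V * D * W).charpoly = D.charpoly := by
  have hmap : ∀ M N : Matrix m m R, (M * N).map (C : R →+* R[X]) = M.map C * N.map C :=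
    fun M N => Matrix.map_mul
  have hVW : V.map (C : R →+* R[X]) * W.map C = 1 := by
    rw [← hmap, h1]; simp
  have hscal : ∀ M : Matrix m m R,
      Matrix.scalar m (X : R[X]) * M.map C = M.map (C : R →+* R[X]) * Matrix.scalar m (X : R[X]) :=
    fun M => (Matrix.scalar_commute (X : R[X]) (fun r' => Commute.all _ _) (M.map C)).eq
  have key : charmatrix (V * D * W) = (V.map C) * charmatrix D * (W.map C) := by
    rw [charmatrix, charmatrix]
    simp only [RingHom.mapMatrix_apply]
    rw [Matrix.mul_sub, Matrix.sub_mul, hmap, hmap, ← hscal V,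
      Matrix.mul_assoc (Matrix.scalar m X) (V.map C) (W.map C), hVW, Matrix.mul_one]
  rw [Matrix.charpoly, Matrix.charpoly, key, det_mul, det_mul]
  rw [mul_comm (det (V.map (C : R →+* R[X]))) _, mul_assoc, ← det_mul, hVW, det_one, mul_one]

lemma charpoly_diagonal_aux {m : Type*} [Fintype m] [DecidableEq m] {R : Type*} [CommRing R]
    (d : m → R) : (Matrix.diagonal d).charpoly = ∏ i, (X - C (d i)) := by
  rw [Matrix.charpoly, charmatrix]
  simp only [RingHom.mapMatrix_apply]
  rw [Matrix.scalar_apply, Matrix.diagonal_map (by simp), Matrix.diagonal_sub, det_diagonal]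

/-- An eigenvector of a tridiagonal matrix with nonzero superdiagonal vanishing at index 0
vanishes identically. -/
lemma jacobi_eigvec_zero (n : ℕ) (A : Matrix (Fin n) (Fin n) ℝ)
    (htri : ∀ i j : Fin n, (i:ℕ) + 1 < (j:ℕ) → A i j = 0)
    (hoff : ∀ i j : Fin n, (i:ℕ) + 1 = (j:ℕ) → A i j ≠ 0)
    (μ : ℝ) (v : Fin n → ℝ) (hv : A.mulVec v = μ • v)
    (h0 : ∀ h : 0 < n, v ⟨0, h⟩ = 0) : v = 0 := by
  have main : ∀ k : ℕ, ∀ hk : k < n, v ⟨k, hk⟩ = 0 := by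
    intro k
    induction k using Nat.strong_induction_on with
    | _ k ih =>
      intro hk
      match k, hk, ih with
      | 0, hk, ih => exact h0 hk
      | (m+1), hk, ih =>
        have hm : m < n := Nat.lt_of_succ_lt hk
        have row : ∑ j, A ⟨m, hm⟩ j * v j = μ * v ⟨m, hm⟩ := by
          have := congrFun hv ⟨m, hm⟩
          simpa [Matrix.mulVec, dotProduct] using this
        have hvm : v ⟨m, hm⟩ = 0 := ih m (Nat.lt_succ_self m) hm
        have hsum : ∑ j, A ⟨m, hm⟩ j * v j = A ⟨m, hm⟩ ⟨m+1, hk⟩ * v ⟨m+1, hk⟩ := by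
          apply Finset.sum_eq_single
          · intro j _ hj
            rcases lt_trichotomy ((j : ℕ)) (m+1) with hlt | heq | hgt
            · have : v j = 0 := by
                have := ih (j : ℕ) hlt j.isLt
                simpa [Fin.eta] using this
              rw [this, mul_zero]
            · exact absurd (Fin.ext heq) hj
            · rw [htri ⟨m, hm⟩ j hgt, zero_mul]
          · intro h
            exact absurd (Finset.mem_univ _) h
        have : A ⟨m, hm⟩ ⟨m+1, hk⟩ * v ⟨m+1, hk⟩ = 0 := by
          rw [← hsum, row, hvm, mul_zero]
        exact (mul_eq_zero.mp this).resolve_left (hoff ⟨m, hm⟩ ⟨m+1, hk⟩ rfl)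
  funext j
  have := main (j : ℕ) j.isLt
  simpa [Fin.eta] using this


/-- A symmetric tridiagonal real matrix with nonzero sub/super-diagonal entries has
`n` distinct real eigenvalues: its characteristic polynomial has `n` distinct real
roots. -/
theorem jacobi_simple_spectrum (n : ℕ) (A : Matrix (Fin n) (Fin n) ℝ)
    (hsym : A.IsSymm)
    (htri : ∀ i j : Fin n, (i:ℕ) + 1 < (j:ℕ) → A i j = 0)
    (hoff : ∀ i j : Fin n, (i:ℕ) + 1 = (j:ℕ) → A i j ≠ 0) :
    (Matrix.charpoly A).roots.toFinset.card = n := by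
  classical
  have hA : A.IsHermitian := by
    rwa [Matrix.IsHermitian, Matrix.conjTranspose_eq_transpose_of_trivial]
  set μ : Fin n → ℝ := hA.eigenvalues with hμ
  set b := hA.eigenvectorBasis with hb
  -- the eigenvalues are pairwise distinct
  have hinj : Function.Injective μ := by
    intro i j hij
    by_contra hne
    have z : Fin n := ⟨0, i.pos⟩
    have hbi := hA.mulVec_eigenvectorBasis i
    have hbj := hA.mulVec_eigenvectorBasis j
    set u : Fin n → ℝ :=
      (b j ⟨0, i.pos⟩) • (⇑(b i) : Fin n → ℝ) - (b i ⟨0, i.pos⟩) • ⇑(b j) with hu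
    have hueig : A.mulVec u = μ i • u := by
      rw [hu, Matrix.mulVec_sub, Matrix.mulVec_smul, Matrix.mulVec_smul, hbi, hbj, ← hμ, ← hij,
        smul_sub, smul_comm (μ i), smul_comm (μ i)]
    have huz : u = 0 := by
      apply jacobi_eigvec_zero n A htri hoff (μ i) u hueig
      intro h
      simp [hu, mul_comm]
    have hcoef : ∀ k, b j ⟨0, i.pos⟩ * b i k = b i ⟨0, i.pos⟩ * b j k := by
      intro k
      have := congrFun huz k
      simp [hu] at this
      linarith [this]
    have horth := hA.eigenvectorBasis.orthonormal
    rw [orthonormal_iff_ite] at horth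
    have hbi0 : b i ⟨0, i.pos⟩ ≠ 0 := by
      intro hz
      have : (⇑(b i) : Fin n → ℝ) = 0 := by
        apply jacobi_eigvec_zero n A htri hoff (μ i) _ hbi
        intro h
        exact hz
      have : b i = 0 := by
        ext k
        exact congrFun this k
      exact hA.eigenvectorBasis.orthonormal.ne_zero i this
    have hbj0 : b j ⟨0, i.pos⟩ ≠ 0 := by
      intro hz
      have : (⇑(b j) : Fin n → ℝ) = 0 := by
        apply jacobi_eigvec_zero n A htri hoff (μ j) _ hbj
        intro h
        exact hz
      have : b j = 0 := by
        ext k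
        exact congrFun this k
      exact hA.eigenvectorBasis.orthonormal.ne_zero j this
    -- inner product of b i and b j
    have hinner : (inner ℝ (b i) (b j) : ℝ) = 0 := by
      have := horth i j
      rw [if_neg hne] at this
      exact this
    have hself : (inner ℝ (b i) (b i) : ℝ) = 1 := by
      have := horth i i
      rw [if_pos rfl] at this
      exact this
    have hsm : b j ⟨0, i.pos⟩ • b i = b i ⟨0, i.pos⟩ • b j := by
      ext k
      simpa using hcoef k
    have : b j ⟨0, i.pos⟩ = 0 := by
      have h1 : (inner ℝ (b i) (b j ⟨0, i.pos⟩ • b i) : ℝ) = b j ⟨0, i.pos⟩ := by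
        rw [real_inner_smul_right, hself, mul_one]
      have h2 : (inner ℝ (b i) (b i ⟨0, i.pos⟩ • b j) : ℝ) = 0 := by
        rw [real_inner_smul_right, hinner, mul_zero]
      rw [← h1, hsm, h2]
    exact hbj0 this
  -- compute the characteristic polynomial
  have hVW : (hA.eigenvectorUnitary : Matrix (Fin n) (Fin n) ℝ)
      * (star (hA.eigenvectorUnitary : Matrix (Fin n) (Fin n) ℝ)) = 1 :=
    (Matrix.mem_unitaryGroup_iff).mp (hA.eigenvectorUnitary).2
  have hdiag : (Matrix.diagonal (RCLike.ofReal ∘ μ) : Matrix (Fin n) (Fin n) ℝ)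
      = Matrix.diagonal μ := by
    congr 1
  have hcp : A.charpoly = ∏ i, (Polynomial.X - Polynomial.C (μ i)) := by
    conv_lhs => rw [hA.spectral_theorem]
    rw [hdiag, Unitary.conjStarAlgAut_apply, charpoly_conj_aux _ _ _ hVW, charpoly_diagonal_aux]
  rw [hcp]
  have hprod : ∏ i, (Polynomial.X - Polynomial.C (μ i))
      = (Multiset.map (fun a => Polynomial.X - Polynomial.C a) (Finset.univ.val.map μ)).prod := by
    rw [Multiset.map_map]
    rfl
  rw [hprod, Polynomial.roots_multiset_prod_X_sub_C, Multiset.toFinset_map]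
  rw [Finset.val_toFinset]
  rw [Finset.card_image_of_injective _ hinj, Finset.card_univ, Fintype.card_fin]
end
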